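/- Colimits of ω-chains of finite Chu spaces do not always exist in the category iC of Chu spaces with monic morphisms. Specifically, the ω-sequence (Cᵢ, φᵢ) where Cᵢ = ({1,...,i}, rᵢ, {1,...,i}) with rᵢ(a,x) = 1 iff a ≤ x, and φᵢ⁺(a) = a, φᵢ⁻(i+1) = i, φᵢ⁻(x) = x for x ≤ i, has no colimit in iC. -/

import Mathlib

universe u

/-- A Chu space over `S`: objects `A`, attributes `X`, satisfaction `r`. -/
structure ChuSpace (S : Type u) : Type (u+1) where
  A : Type u
  X : Type u
  r : A → X → S

/-- A Chu morphism `(f, g)`. -/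
@[ext]
structure ChuHom {S : Type u} (C D : ChuSpace S) : Type u where
  f : C.A → D.A
  g : D.X → C.X
  comm : ∀ a y, D.r (f a) y = C.r a (g y)

variable {S : Type u}

/-- Composition of Chu morphisms: `ψ.comp φ = ψ ∘ φ`. -/
def ChuHom.comp {C D E : ChuSpace S} (ψ : ChuHom D E) (φ : ChuHom C D) : ChuHom C E where
  f := ψ.f ∘ φ.f
  g := φ.g ∘ ψ.g
  comm := fun a y => by
    simp only [Function.comp_apply]
    rw [ψ.comm, φ.comm]

def ChuHom.idHom (C : ChuSpace S) : ChuHom C C := ⟨id, id, fun _ _ => rfl⟩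

/-- `φ` is an isomorphism of Chu spaces. -/
def ChuIso {C D : ChuSpace S} (φ : ChuHom C D) : Prop :=
  ∃ ψ : ChuHom D C, φ.comp ψ = ChuHom.idHom D ∧ ψ.comp φ = ChuHom.idHom C

/-- No repeated columns. -/
def ChuExtensional (C : ChuSpace S) : Prop :=
  ∀ x y : C.X, (∀ a, C.r a x = C.r a y) → x = y

/-- No repeated rows. -/
def ChuSeparable (C : ChuSpace S) : Prop :=
  ∀ a b : C.A, (∀ x, C.r a x = C.r b x) → a = b

def ChuBiextensional (C : ChuSpace S) : Prop := ChuExtensional C ∧ ChuSeparable C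

/-- Discrete: every function `A → S` is realized by a column. -/
def ChuDiscrete (C : ChuSpace S) : Prop :=
  ∀ f : C.A → S, ∃ x : C.X, ∀ a, C.r a x = f a

/-- `φ` is monic in the full subcategory of Chu spaces satisfying `Obj`. -/
def MonicIn (Obj : ChuSpace S → Prop) {C D : ChuSpace S} (φ : ChuHom C D) : Prop :=
  ∀ (E : ChuSpace S), Obj E → ∀ ψ₁ ψ₂ : ChuHom E C,
    φ.comp ψ₁ = φ.comp ψ₂ → ψ₁ = ψ₂

/-- Monics of the category `C` of Chu spaces: injective forward, surjective backward. -/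
def IsMonoC {C D : ChuSpace S} (φ : ChuHom C D) : Prop :=
  Function.Injective φ.f ∧ Function.Surjective φ.g

/-- Monics of the categories `E` and `B`: injective forward component. -/
def IsMonoE {C D : ChuSpace S} (φ : ChuHom C D) : Prop :=
  Function.Injective φ.f

/-- An ω-sequence of Chu spaces. -/
structure ChuSeq (S : Type u) : Type (u+1) where
  C : ℕ → ChuSpace S
  φ : ∀ i, ChuHom (C i) (C (i+1))

/-- A cocone from the ω-sequence `T` to `C`. -/
structure Cocone (T : ChuSeq S) (C : ChuSpace S) : Type u where
  ψ : ∀ i, ChuHom (T.C i) C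
  compat : ∀ i, (ψ (i+1)).comp (T.φ i) = ψ i

/-- `c` is a colimit of `T` in the subcategory with objects `Obj` and morphisms `Mor`. -/
structure IsColimit (Obj : ChuSpace S → Prop)
    (Mor : ∀ C D : ChuSpace S, ChuHom C D → Prop)
    (T : ChuSeq S) (C : ChuSpace S) (c : Cocone T C) : Prop where
  obj : Obj C
  mor : ∀ i, Mor _ _ (c.ψ i)
  univ : ∀ (C' : ChuSpace S), Obj C' → ∀ (c' : Cocone T C'), (∀ i, Mor _ _ (c'.ψ i)) →
      ∃! μ : ChuHom C C', Mor _ _ μ ∧ ∀ i, μ.comp (c.ψ i) = c'.ψ i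

/-- A finite object in the subcategory `(Obj, Mor)`: every morphism into a colimit of an
ω-sequence factors through some stage. -/
def FiniteObjIn (Obj : ChuSpace S → Prop) (Mor : ∀ C D : ChuSpace S, ChuHom C D → Prop)
    (F : ChuSpace S) : Prop :=
  Obj F ∧ ∀ (T : ChuSeq S), (∀ i, Obj (T.C i)) → (∀ i, Mor _ _ (T.φ i)) →
    ∀ (C : ChuSpace S) (c : Cocone T C), IsColimit Obj Mor T C c →
      ∀ φ : ChuHom F C, Mor _ _ φ →
        ∃ (i : ℕ) (ψ : ChuHom F (T.C i)), Mor _ _ ψ ∧ (c.ψ i).comp ψ = φ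

/-- Strongly finite: a finite object of `iC` with finite object set,
finite and non-empty attribute set. -/
def StronglyFinite (F : ChuSpace S) : Prop :=
  FiniteObjIn (fun _ => True) (fun _ _ φ => IsMonoC φ) F ∧
    Finite F.A ∧ Finite F.X ∧ Nonempty F.X


/-- The finite biextensional Chu space with objects and attributes `{1, …, n+1}`
(encoded as `Fin (n+1)`) and `r a x = 1` iff `a ≤ x`. -/
def stairChu (n : ℕ) : ChuSpace.{0} Bool :=
  ⟨Fin (n+1), Fin (n+1), fun a x => decide (a.1 ≤ x.1)⟩

/-- The connecting monic morphism: forward the inclusion, backward collapsing the top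
attribute `n+2` to `n+1` and the identity otherwise. -/
def stairHom (n : ℕ) : ChuHom (stairChu n) (stairChu (n+1)) where
  f := fun a => ⟨a.1, by omega⟩
  g := fun x => ⟨min x.1 n, by omega⟩
  comm := by
    intro a x
    have := a.isLt
    simp only [stairChu, decide_eq_decide]
    omega

def stairSeq : ChuSeq Bool := ⟨stairChu, stairHom⟩

/-- Auxiliary target space with attributes `ℕ`. -/
def stairD1 : ChuSpace.{0} Bool := ⟨ℕ, ℕ, fun a x => decide (a ≤ x)⟩

/-- Auxiliary target space with attributes `ℕ` plus a top column `none`. -/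
def stairD2 : ChuSpace.{0} Bool :=
  ⟨ℕ, Option ℕ, fun a x => x.elim true (fun k => decide (a ≤ k))⟩

def stairCocone1 : Cocone stairSeq stairD1 where
  ψ i :=
    { f := fun a => a.1
      g := fun k => ⟨min k i, by omega⟩
      comm := by
        intro a x
        have := a.isLt
        simp only [stairSeq, stairChu, stairD1, decide_eq_decide]
        omega }
  compat i := by
    refine ChuHom.ext ?_ ?_
    · rfl
    · funext k
      apply Fin.ext
      simp only [ChuHom.comp, Function.comp_apply, stairSeq, stairHom]
      show min (min (show ℕ from k) (i + 1)) i = min (show ℕ from k) i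
      omega

def stairCocone2 : Cocone stairSeq stairD2 where
  ψ i :=
    { f := fun a => a.1
      g := fun x => x.elim ⟨i, by omega⟩ (fun k => ⟨min k i, by omega⟩)
      comm := by
        intro a x
        have := a.isLt
        cases x with
        | none => simp only [stairSeq, stairChu, stairD2, Option.elim]; simp; omega
        | some k =>
          simp only [stairSeq, stairChu, stairD2, Option.elim, decide_eq_decide]
          omega }
  compat i := by
    refine ChuHom.ext ?_ ?_
    · rfl
    · funext x
      cases x with
      | none =>
        apply Fin.ext
        simp only [ChuHom.comp, Function.comp_apply, stairSeq, stairHom, Option.elim]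
        show min (i + 1) i = i
        omega
      | some k =>
        apply Fin.ext
        simp only [ChuHom.comp, Function.comp_apply, stairSeq, stairHom, Option.elim]
        show min (min k (i + 1)) i = min k i
        omega

lemma stairCocone1_mono (i : ℕ) : IsMonoC (stairCocone1.ψ i) := by
  constructor
  · intro a b h
    exact Fin.ext h
  · intro k
    exact ⟨k.1, Fin.ext (by have := k.isLt; simp [stairCocone1]; omega)⟩

lemma stairCocone2_mono (i : ℕ) : IsMonoC (stairCocone2.ψ i) := by
  constructor
  · intro a b h
    exact Fin.ext h
  · intro k
    refine ⟨some k.1, Fin.ext ?_⟩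
    have := k.isLt
    simp [stairCocone2, Option.elim]
    omega

/-- Colimits of ω-chains of finite Chu spaces do not always exist in `iC`:
the staircase sequence has no colimit in the category of Chu spaces over `{0,1}`
with monic morphisms (injective forward, surjective backward components). -/
theorem stmt9 :
    ¬ ∃ (C : ChuSpace.{0} Bool) (c : Cocone stairSeq C),
      IsColimit (fun _ => True) (fun _ _ φ => IsMonoC φ) stairSeq C c := by
  rintro ⟨C, c, hcol⟩
  obtain ⟨μ₁, ⟨hμ₁mono, hμ₁⟩, -⟩ :=
    hcol.univ stairD1 trivial stairCocone1 stairCocone1_mono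
  obtain ⟨μ₂, ⟨hμ₂mono, hμ₂⟩, -⟩ :=
    hcol.univ stairD2 trivial stairCocone2 stairCocone2_mono
  have hsurj : ∀ x : C.X, ∃ n : ℕ, μ₁.g n = x := hμ₁mono.2
  obtain ⟨y, hy⟩ := hsurj (μ₂.g none)
  have e1 : (c.ψ (y+1)).g (μ₂.g none) = (stairCocone2.ψ (y+1)).g none :=
    congrFun (congrArg ChuHom.g (hμ₂ (y+1))) none
  have e2 : (c.ψ (y+1)).g (μ₁.g y) = (stairCocone1.ψ (y+1)).g y :=
    congrFun (congrArg ChuHom.g (hμ₁ (y+1))) y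
  rw [hy, e1] at e2
  have := congrArg Fin.val e2
  simp [stairCocone1, stairCocone2, Option.elim] at this
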